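/- Let {E_i = |φ_i⟩⟨φ_i|}_{i=1}^n be a rank-1 POVM on a d-dimensional Hilbert space such that no effect is a projector, i.e., ⟨φ_i|φ_i⟩ < 1 for all i. Then for every density matrix ρ, H({p_i(ρ)}) > S(ρ), where p_i(ρ) = ⟨φ_i|ρ|φ_i⟩. Consequently C_rel(ρ, E) = H({p_i(ρ)}) − S(ρ) > 0, so the set of POVM-incoherent states is empty. -/

import Mathlib

open Matrix Kronecker Complex ComplexOrder

/-- Von Neumann entropy of a (Hermitian) matrix: S(ρ) = −Σ λ_i log λ_i over the
eigenvalues of ρ. -/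
noncomputable def vN {ι : Type*} [Fintype ι] [DecidableEq ι]
    (ρ : Matrix ι ι ℂ) : ℝ :=
  if h : ρ.IsHermitian then ∑ i, Real.negMulLog (h.eigenvalues i) else 0

lemma negMulLog_pos_of_lt_one {s : ℝ} (h0 : 0 < s) (h1 : s < 1) :
    0 < Real.negMulLog s := by
  have := Real.log_neg h0 h1
  unfold Real.negMulLog
  nlinarith

/-- The per-outcome concavity step. -/
lemma step_concave {d : ℕ} (lam c : Fin d → ℝ) (hlam : ∀ k, 0 ≤ lam k)
    (hc : ∀ k, 0 ≤ c k) (hs1 : ∑ k, c k < 1) :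
    (∑ k, c k * Real.negMulLog (lam k) ≤ Real.negMulLog (∑ k, c k * lam k)) ∧
    (0 < ∑ k, c k * lam k →
      ∑ k, c k * Real.negMulLog (lam k) < Real.negMulLog (∑ k, c k * lam k)) := by
  set s := ∑ k, c k with hs
  set p := ∑ k, c k * lam k with hp
  have hp0 : 0 ≤ p := Finset.sum_nonneg fun k _ => mul_nonneg (hc k) (hlam k)
  by_cases hpz : p = 0
  · have hterm : ∀ k ∈ Finset.univ, c k * lam k = 0 := by
      rw [← Finset.sum_eq_zero_iff_of_nonneg (fun k _ => mul_nonneg (hc k) (hlam k))]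
      exact hpz.symm ▸ rfl
    have hL : ∑ k, c k * Real.negMulLog (lam k) = 0 := by
      apply Finset.sum_eq_zero
      intro k hk
      rcases mul_eq_zero.mp (hterm k hk) with h | h
      · simp [h]
      · simp [h, Real.negMulLog_zero]
    rw [hpz, hL, Real.negMulLog_zero]
    exact ⟨le_refl 0, fun h => absurd rfl h.ne'⟩
  · have hppos : 0 < p := lt_of_le_of_ne hp0 (Ne.symm hpz)
    have hs0 : 0 < s := by
      rcases lt_or_eq_of_le (Finset.sum_nonneg fun k _ => hc k) with h | h
      · exact h
      · exfalso
        have : ∀ k ∈ Finset.univ, c k = 0 := by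
          rw [← Finset.sum_eq_zero_iff_of_nonneg (fun k _ => hc k)]
          exact h.symm
        apply hpz
        rw [hp]
        exact Finset.sum_eq_zero fun k hk => by rw [this k hk, zero_mul]
    set q := p / s with hq
    have hqpos : 0 < q := div_pos hppos hs0
    -- Jensen with weights c k / s
    have hjen : ∑ k, (c k / s) * Real.negMulLog (lam k) ≤ Real.negMulLog q := by
      have h := (Real.strictConcaveOn_negMulLog.concaveOn).le_map_sum
        (t := Finset.univ) (w := fun k => c k / s) (p := lam)
        (fun k _ => div_nonneg (hc k) hs0.le)
        (by rw [← Finset.sum_div]; exact div_self hs0.ne')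
        (fun k _ => Set.mem_Ici.mpr (hlam k))
      have hq' : ∑ k, (c k / s) • lam k = q := by
        simp only [smul_eq_mul, hq, hp]
        rw [Finset.sum_div]
        exact Finset.sum_congr rfl fun k _ => by ring
      rw [hq'] at h
      simpa [smul_eq_mul] using h
    have hLs : ∑ k, c k * Real.negMulLog (lam k)
        = s * ∑ k, (c k / s) * Real.negMulLog (lam k) := by
      rw [Finset.mul_sum]
      exact Finset.sum_congr rfl fun k _ => by field_simp
    have hpsq : p = s * q := by rw [hq, mul_div_assoc', mul_div_cancel_left₀ p hs0.ne']
    have hmul : Real.negMulLog p = q * Real.negMulLog s + s * Real.negMulLog q := by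
      rw [hpsq, Real.negMulLog_mul]
    have hpos : 0 < q * Real.negMulLog s :=
      mul_pos hqpos (negMulLog_pos_of_lt_one hs0 (hs ▸ hs1))
    have hstrict : ∑ k, c k * Real.negMulLog (lam k) < Real.negMulLog p := by
      rw [hmul, hLs]
      have : s * ∑ k, (c k / s) * Real.negMulLog (lam k) ≤ s * Real.negMulLog q :=
        mul_le_mul_of_nonneg_left hjen hs0.le
      linarith
    exact ⟨hstrict.le, fun _ => hstrict⟩

/-- The key real-analysis inequality. -/
lemma key_entropy_lt {n d : ℕ} (lam : Fin d → ℝ) (c : Fin n → Fin d → ℝ)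
    (hlam : ∀ k, 0 ≤ lam k) (hlsum : ∑ k, lam k = 1)
    (hc : ∀ i k, 0 ≤ c i k) (hcol : ∀ k, ∑ i, c i k = 1)
    (hrow : ∀ i, ∑ k, c i k < 1) :
    ∑ k, Real.negMulLog (lam k) < ∑ i, Real.negMulLog (∑ k, c i k * lam k) := by
  have hL : ∑ k, Real.negMulLog (lam k)
      = ∑ i, ∑ k, c i k * Real.negMulLog (lam k) := by
    rw [Finset.sum_comm]
    refine Finset.sum_congr rfl fun k _ => ?_
    rw [← Finset.sum_mul, hcol k, one_mul]
  rw [hL]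
  have htot : ∑ i, ∑ k, c i k * lam k = 1 := by
    rw [Finset.sum_comm]
    calc ∑ k, ∑ i, c i k * lam k = ∑ k, (∑ i, c i k) * lam k := by
          refine Finset.sum_congr rfl fun k _ => ?_
          rw [Finset.sum_mul]
      _ = ∑ k, lam k := by
          refine Finset.sum_congr rfl fun k _ => by rw [hcol k, one_mul]
      _ = 1 := hlsum
  have hex : ∃ i ∈ Finset.univ, 0 < ∑ k, c i k * lam k := by
    by_contra h
    push_neg at h
    have : ∑ i, ∑ k, c i k * lam k = 0 := by
      apply Finset.sum_eq_zero
      intro i hi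
      exact le_antisymm (h i hi)
        (Finset.sum_nonneg fun k _ => mul_nonneg (hc i k) (hlam k))
    rw [this] at htot
    exact one_ne_zero htot.symm
  obtain ⟨i, hi, hip⟩ := hex
  exact Finset.sum_lt_sum
    (fun i _ => (step_concave lam (c i) hlam (hc i) (hrow i)).1)
    ⟨i, hi, (step_concave lam (c i) hlam (hc i) (hrow i)).2 hip⟩

/-- For a rank-1 POVM {|φ_i⟩⟨φ_i|} in which no effect is a
projector (⟨φ_i|φ_i⟩ < 1 for all i), every density matrix satisfies
H({p_i(ρ)}) > S(ρ), hence C_rel(ρ,E) = H({p_i(ρ)}) − S(ρ) > 0 and no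
POVM-incoherent state exists. -/
theorem rank_one_povm_no_incoherent_states (d n : ℕ)
    (φ : Fin n → Fin d → ℂ)
    (hsum : ∑ i, Matrix.vecMulVec (φ i) (star (φ i)) = 1)
    (hsub : ∀ i, (star (φ i) ⬝ᵥ φ i).re < 1)
    (ρ : Matrix (Fin d) (Fin d) ℂ) (hρ : ρ.PosSemidef) (htr : ρ.trace = 1) :
    vN ρ < ∑ i, Real.negMulLog ((star (φ i) ⬝ᵥ ρ *ᵥ φ i).re) := by
  have hH : ρ.IsHermitian := hρ.1
  set U : Matrix (Fin d) (Fin d) ℂ := (hH.eigenvectorUnitary : Matrix (Fin d) (Fin d) ℂ) with hUdef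
  have hU1 : U * star U = 1 := Matrix.mem_unitaryGroup_iff.mp (hH.eigenvectorUnitary).2
  have hU2 : star U * U = 1 := Matrix.mem_unitaryGroup_iff'.mp (hH.eigenvectorUnitary).2
  set lam : Fin d → ℝ := hH.eigenvalues with hlamdef
  have hlam0 : ∀ k, 0 ≤ lam k := fun k => hρ.eigenvalues_nonneg k
  have hspec : ρ = U * Matrix.diagonal (fun k => ((lam k : ℝ) : ℂ)) * star U := by
    have h := hH.spectral_theorem
    have : (RCLike.ofReal ∘ lam : Fin d → ℂ) = fun k => ((lam k : ℝ) : ℂ) := rfl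
    rwa [this] at h
  -- transformed vectors
  set ψ : Fin n → Fin d → ℂ := fun i => (star U) *ᵥ (φ i) with hψdef
  set c : Fin n → Fin d → ℝ := fun i k => Complex.normSq (ψ i k) with hcdef
  have hc0 : ∀ i k, 0 ≤ c i k := fun i k => Complex.normSq_nonneg _
  -- Claim A : probabilities
  have hA : ∀ i, (star (φ i) ⬝ᵥ ρ *ᵥ φ i).re = ∑ k, c i k * lam k := by
    intro i
    have h1 : star (φ i) ⬝ᵥ ρ *ᵥ φ i
        = star (ψ i) ⬝ᵥ (Matrix.diagonal (fun k => ((lam k : ℝ) : ℂ))) *ᵥ ψ i := by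
      rw [hspec]
      rw [← Matrix.mulVec_mulVec, ← Matrix.mulVec_mulVec]
      rw [Matrix.dotProduct_mulVec (star (φ i)) U]
      congr 1
      rw [hψdef]
      simp [Matrix.star_mulVec, Matrix.star_eq_conjTranspose,
        Matrix.conjTranspose_conjTranspose]
    have h2 : star (ψ i) ⬝ᵥ (Matrix.diagonal (fun k => ((lam k : ℝ) : ℂ))) *ᵥ ψ i
        = ∑ k, ((c i k * lam k : ℝ) : ℂ) := by
      simp only [dotProduct, Matrix.mulVec_diagonal, Pi.star_apply]
      refine Finset.sum_congr rfl fun k _ => ?_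
      have h3 : star (ψ i k) * ((lam k : ℂ) * ψ i k)
          = (lam k : ℂ) * ((ψ i k) * (starRingEnd ℂ) (ψ i k)) := by
        rw [RCLike.star_def]; ring
      rw [h3, Complex.mul_conj]
      push_cast
      ring
    rw [h1, h2]
    rw [← Complex.ofReal_sum]
    exact Complex.ofReal_re _
  -- Claim C : row sums
  have hC : ∀ i, ∑ k, c i k = (star (φ i) ⬝ᵥ φ i).re := by
    intro i
    have h1 : star (ψ i) ⬝ᵥ ψ i = star (φ i) ⬝ᵥ φ i := by
      rw [hψdef]
      simp only [Matrix.star_mulVec, Matrix.star_eq_conjTranspose,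
        Matrix.conjTranspose_conjTranspose]
      rw [← Matrix.dotProduct_mulVec, Matrix.mulVec_mulVec]
      rw [show U * Uᴴ = 1 from Matrix.star_eq_conjTranspose U ▸ hU1, Matrix.one_mulVec]
    have h2 : star (ψ i) ⬝ᵥ ψ i = ∑ k, ((c i k : ℝ) : ℂ) := by
      simp only [dotProduct, Pi.star_apply]
      refine Finset.sum_congr rfl fun k _ => ?_
      rw [RCLike.star_def, mul_comm, Complex.mul_conj]
    have := h2.symm.trans h1
    calc ∑ k, c i k = (∑ k, ((c i k : ℝ) : ℂ)).re := by
          rw [← Complex.ofReal_sum]; exact (Complex.ofReal_re _).symm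
      _ = (star (φ i) ⬝ᵥ φ i).re := by rw [this]
  -- Claim B : column sums
  have hB : ∀ k, ∑ i, c i k = 1 := by
    intro k
    have hmat : ∀ i, Matrix.vecMulVec (ψ i) (star (ψ i))
        = star U * (Matrix.vecMulVec (φ i) (star (φ i))) * U := by
      intro i
      ext p q
      simp only [Matrix.vecMulVec_apply, hψdef, Matrix.mulVec, Matrix.mul_apply,
        Matrix.star_mulVec, Matrix.vecMul, dotProduct, Pi.star_apply,
        Matrix.star_apply, Matrix.star_eq_conjTranspose,
        Matrix.conjTranspose_apply, star_star, Finset.sum_mul, Finset.mul_sum]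
      refine Finset.sum_congr rfl fun a _ => Finset.sum_congr rfl fun b _ => ?_
      ring
    have hsum' : ∑ i, Matrix.vecMulVec (ψ i) (star (ψ i)) = 1 := by
      calc ∑ i, Matrix.vecMulVec (ψ i) (star (ψ i))
          = ∑ i, star U * (Matrix.vecMulVec (φ i) (star (φ i))) * U := by
            exact Finset.sum_congr rfl fun i _ => hmat i
        _ = star U * (∑ i, Matrix.vecMulVec (φ i) (star (φ i))) * U := by
            rw [← Finset.sum_mul, ← Finset.mul_sum]
        _ = 1 := by rw [hsum, mul_one, hU2]
    have hkk := congrFun (congrFun hsum' k) k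
    have hlhs : (∑ i, Matrix.vecMulVec (ψ i) (star (ψ i))) k k
        = ∑ i, ((c i k : ℝ) : ℂ) := by
      rw [Matrix.sum_apply]
      refine Finset.sum_congr rfl fun i _ => ?_
      simp only [Matrix.vecMulVec_apply, Pi.star_apply]
      rw [RCLike.star_def, Complex.mul_conj]
    rw [hlhs] at hkk
    have hone : ((1 : Matrix (Fin d) (Fin d) ℂ)) k k = 1 := Matrix.one_apply_eq k
    rw [hone] at hkk
    have : ((∑ i, c i k : ℝ) : ℂ) = 1 := by rw [Complex.ofReal_sum]; exact hkk
    exact_mod_cast this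
  -- Claim E : eigenvalues sum to 1
  have hE : ∑ k, lam k = 1 := by
    have htr' : ρ.trace = ∑ k, ((lam k : ℝ) : ℂ) := by
      rw [hspec, Matrix.trace_mul_cycle, hU2, one_mul, Matrix.trace_diagonal]
    rw [htr] at htr'
    have : ((∑ k, lam k : ℝ) : ℂ) = 1 := by rw [Complex.ofReal_sum]; exact htr'.symm
    exact_mod_cast this
  -- Claim D : vN
  have hD : vN ρ = ∑ k, Real.negMulLog (lam k) := by
    unfold vN
    rw [dif_pos hH]
  rw [hD]
  have hgoal : ∀ i, Real.negMulLog ((star (φ i) ⬝ᵥ ρ *ᵥ φ i).re)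
      = Real.negMulLog (∑ k, c i k * lam k) := fun i => by rw [hA i]
  calc ∑ k, Real.negMulLog (lam k)
      < ∑ i, Real.negMulLog (∑ k, c i k * lam k) :=
        key_entropy_lt lam c hlam0 hE hc0 hB (fun i => (hC i).symm ▸ hsub i)
    _ = ∑ i, Real.negMulLog ((star (φ i) ⬝ᵥ ρ *ᵥ φ i).re) :=
        Finset.sum_congr rfl fun i _ => (hgoal i).symm
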